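/- In the Wess–Zumino setup on the quantum plane, the relation y • dx = p • (dx • y) holds in M, where p = r/q. -/

import Mathlib

open MulOpposite


/-- The defining relation of the quantum plane: x*y = q • (y*x) in the free
complex algebra on two generators. -/
inductive qpRel (q : ℂ) : FreeAlgebra ℂ (Fin 2) → FreeAlgebra ℂ (Fin 2) → Prop
  | rel : qpRel q (FreeAlgebra.ι ℂ 0 * FreeAlgebra.ι ℂ 1)
      (q • (FreeAlgebra.ι ℂ 1 * FreeAlgebra.ι ℂ 0))

/-- The quantum plane: quotient of the free complex algebra on two generators
by the two-sided ideal generated by x*y − q • (y*x). -/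
abbrev QPlane (q : ℂ) : Type := RingQuot (qpRel q)

/-- The generator x of the quantum plane. -/
noncomputable def qpX (q : ℂ) : QPlane q :=
  RingQuot.mkAlgHom ℂ (qpRel q) (FreeAlgebra.ι ℂ 0)

/-- The generator y of the quantum plane. -/
noncomputable def qpY (q : ℂ) : QPlane q :=
  RingQuot.mkAlgHom ℂ (qpRel q) (FreeAlgebra.ι ℂ 1)

/-- In the Wess–Zumino setup on the quantum plane, y • dx = p • (dx • y). -/
theorem stmt9
    (q r : ℂ) (hq0 : q ≠ 0) (hq1 : q ≠ 1) (hqm1 : q ≠ -1)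
    (hr0 : r ≠ 0) (hr1 : r ≠ 1)
    (M : Type*) [AddCommGroup M] [Module ℂ M]
    [Module (QPlane q) M] [Module (QPlane q)ᵐᵒᵖ M]
    [SMulCommClass (QPlane q) (QPlane q)ᵐᵒᵖ M]
    [IsScalarTower ℂ (QPlane q) M] [IsScalarTower ℂ (QPlane q)ᵐᵒᵖ M]
    (φ₁ φ₂ : QPlane q ≃ₐ[ℂ] QPlane q)
    (hφ₁x : φ₁ (qpX q) = r⁻¹ • qpX q) (hφ₁y : φ₁ (qpY q) = r⁻¹ • qpY q)
    (hφ₂x : φ₂ (qpX q) = qpX q) (hφ₂y : φ₂ (qpY q) = r⁻¹ • qpY q)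
    (θ1 θ2 : M)
    (hθ₁ : ∀ w : QPlane q, MulOpposite.op w • θ1 = (φ₁ w) • θ1)
    (hθ₂ : ∀ w : QPlane q, MulOpposite.op w • θ2 = (φ₂ w) • θ2)
    (dx dy : M)
    (hdx : dx = (φ₁ (qpX q) - qpX q) • θ1 + (φ₂ (qpX q) - qpX q) • θ2)
    (hdy : dy = (φ₁ (qpY q) - qpY q) • θ1 + (φ₂ (qpY q) - qpY q) • θ2)
    (p : ℂ) (hp : p = r / q) :
    qpY q • dx = p • (MulOpposite.op (qpY q) • dx) := by
  have hrel : qpX q * qpY q = q • (qpY q * qpX q) := by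
    have h := RingQuot.mkAlgHom_rel ℂ (qpRel.rel (q := q))
    simpa [qpX, qpY, map_mul] using h
  have hsc : r⁻¹ • qpX q - qpX q = (r⁻¹ - 1) • qpX q := by module
  have hdx' : dx = ((r⁻¹ - 1) • qpX q) • θ1 := by
    rw [hdx, hφ₁x, hφ₂x, hsc, sub_self, zero_smul, add_zero]
  have key : op (qpY q) • dx = ((r⁻¹ - 1) * r⁻¹ * q) • ((qpY q * qpX q) • θ1) := by
    rw [hdx', ← smul_comm ((r⁻¹ - 1) • qpX q) (op (qpY q)) θ1, hθ₁, hφ₁y,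
      smul_assoc, ← mul_smul (qpX q), mul_smul_comm, hrel,
      smul_assoc, smul_assoc, smul_smul, smul_smul, mul_assoc]
  rw [key, hdx', ← mul_smul, mul_smul_comm, smul_assoc, smul_smul]
  congr 1
  field_simp [hp]
  rw [hp, div_mul_cancel₀ r hq0]
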